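/- For every integer k ≥ 2, the k × k grid Γ_k is a strong immersion of the graph W⁺_k obtained from the k-wall by doubling every edge that lies on both a vertical and a horizontal path; moreover there is a Γ_k-strong-immersion model whose set of branch vertices is {(i, 2j+1) : 1 ≤ i ≤ k+1, 0 ≤ j ≤ k}. -/

import Mathlib

open scoped Classical

/-- A finite loopless multigraph: `E` indexes edges, `ends e` gives the endpoints. -/
structure Multigraph (V : Type) (E : Type) where
  ends : E → Sym2 V
  loopless : ∀ e, ¬ (ends e).IsDiag

namespace Multigraph

variable {V E V1 E1 V2 E2 : Type}

/-- Multidegree: number of edges (with multiplicity) incident with `v`. -/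
noncomputable def mdeg (G : Multigraph V E) [Fintype E] (v : V) : ℕ :=
  (Finset.univ.filter (fun e => v ∈ G.ends e)).card

/-- Walks in a multigraph, remembering which edge instance is used at each step. -/
inductive Walk (G : Multigraph V E) : V → V → Type where
  | nil (v : V) : Walk G v v
  | cons {u v w : V} (e : E) (he : G.ends e = s(u, v)) (p : Walk G v w) : Walk G u w

namespace Walk

variable {G : Multigraph V E}

def support : {u v : V} → G.Walk u v → List V
  | u, _, .nil _ => [u]
  | u, _, .cons _ _ p => u :: p.support

def edges : {u v : V} → G.Walk u v → List E
  | _, _, .nil _ => []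
  | _, _, .cons e _ p => e :: p.edges

/-- A walk is a path when its vertices are pairwise distinct. -/
def IsPath {u v : V} (p : G.Walk u v) : Prop := p.support.Nodup

/-- The internal vertices of a walk (all vertices except the two endpoints). -/
def interior {u v : V} (p : G.Walk u v) : List V := p.support.tail.dropLast

end Walk

/-- An `H`-immersion model in `G`. -/
structure ImmersionModel (H : Multigraph V1 E1) (G : Multigraph V E) where
  vmap : V1 → V
  vmap_inj : Function.Injective vmap
  src : E1 → V1
  tgt : E1 → V1
  ends_eq : ∀ e, H.ends e = s(src e, tgt e)
  path : ∀ e, G.Walk (vmap (src e)) (vmap (tgt e))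
  path_isPath : ∀ e, (path e).IsPath
  edge_disjoint : ∀ e₁ e₂, e₁ ≠ e₂ → ∀ x, x ∈ (path e₁).edges → x ∉ (path e₂).edges

namespace ImmersionModel

variable {H : Multigraph V1 E1} {G : Multigraph V E}

/-- The edges of the immersion expansion associated with the model. -/
def edgeSet (m : ImmersionModel H G) : Set E := {x | ∃ e, x ∈ (m.path e).edges}

/-- The vertices of the immersion expansion associated with the model. -/
def vertSet (m : ImmersionModel H G) : Set V :=
  {x | (∃ a, m.vmap a = x) ∨ ∃ e, x ∈ (m.path e).support}

end ImmersionModel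

/-- `G` contains `H` as an immersion. -/
def Immersed (H : Multigraph V1 E1) (G : Multigraph V E) : Prop :=
  Nonempty (ImmersionModel H G)

/-- Deleting a set of edges from a multigraph. -/
def deleteEdges (G : Multigraph V E) (F : Set E) : Multigraph V {e : E // e ∉ F} where
  ends e := G.ends e.1
  loopless e := G.loopless e.1

/-- The minimum size of an `H`-cover of `G`: a set of edges meeting every
`H`-immersion expansion. (By convention `sInf ∅ = 0`.) -/
noncomputable def coverNum (H : Multigraph V1 E1) (G : Multigraph V E) : ℕ :=
  sInf {n | ∃ C : Finset E, ¬ Immersed H (G.deleteEdges ↑C) ∧ C.card = n}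

/-- The maximum size of an `H`-packing in `G`: a collection of pairwise
edge-disjoint `H`-immersion expansions. -/
noncomputable def packNum (H : Multigraph V1 E1) (G : Multigraph V E) : ℕ :=
  sSup {n | ∃ f : Fin n → ImmersionModel H G,
    ∀ i j, i ≠ j → Disjoint (f i).edgeSet (f j).edgeSet}

/-- Connectivity of a multigraph. -/
def Connected (G : Multigraph V E) : Prop :=
  Nonempty V ∧ ∀ u v : V, Nonempty (G.Walk u v)

/-- Reachability in `G` avoiding the vertex set `X`. -/
def ReachAvoid (G : Multigraph V E) (X : Set V) (u v : V) : Prop :=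
  ∃ p : G.Walk u v, ∀ x ∈ p.support, x ∉ X

/-- The underlying simple graph of a multigraph. -/
def toSimple (G : Multigraph V E) : SimpleGraph V where
  Adj u v := u ≠ v ∧ ∃ e, G.ends e = s(u, v)
  symm := ⟨by
    rintro u v ⟨h, e, he⟩
    exact ⟨h.symm, e, by rw [he, Sym2.eq_swap]⟩⟩
  loopless := ⟨fun v h => h.1 rfl⟩

end Multigraph

section Minor

/-- `A` is a minor of `B` (branch-set/minor-model definition). -/
def SimpleGraphMinorOf {α β : Type} (A : SimpleGraph α) (B : SimpleGraph β) : Prop :=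
  ∃ C : α → Set β,
    (∀ a, (C a).Nonempty) ∧
    (∀ a, (B.induce (C a)).Connected) ∧
    (Pairwise fun a a' => Disjoint (C a) (C a')) ∧
    (∀ a a', A.Adj a a' → ∃ x ∈ C a, ∃ y ∈ C a', B.Adj x y)

end Minor

namespace Multigraph

variable {V E : Type}

/-- Planarity of a loopless multigraph, via Wagner's theorem: no `K₅` and
no `K₃,₃` minor in the underlying simple graph. -/
def Planar (G : Multigraph V E) : Prop :=
  ¬ SimpleGraphMinorOf (SimpleGraph.completeGraph (Fin 5)) G.toSimple ∧
  ¬ SimpleGraphMinorOf (completeBipartiteGraph (Fin 3) (Fin 3)) G.toSimple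

lemma isDiag_map_inl {α β : Type} (p : Sym2 α) :
    (p.map (Sum.inl : α → α ⊕ β)).IsDiag ↔ p.IsDiag := by
  induction p using Sym2.ind with
  | _ a b => simp

/-- `G⁺`: attach to every vertex `v` a gadget of two new vertices `(v,false)`,
`(v,true)` joined by a double edge, each joined to `v` by a single edge. -/
def plus (G : Multigraph V E) :
    Multigraph (V ⊕ (V × Bool)) (E ⊕ ((V × Fin 2) ⊕ (V × Bool))) where
  ends
    | .inl e => (G.ends e).map .inl
    | .inr (.inl (v, _)) => s(.inr (v, false), .inr (v, true))
    | .inr (.inr (v, b)) => s(.inl v, .inr (v, b))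
  loopless := by
    rintro (e | ⟨v, i⟩ | ⟨v, b⟩) h
    · exact G.loopless e ((isDiag_map_inl _).1 h)
    · simp at h
    · simp at h

/-- `G*`: attach, at every vertex `v` and for every `i ∈ {1,…,mdeg v}`, a gadget of two
new vertices joined by a double edge, each joined to `v` by a single edge. -/
noncomputable def star (G : Multigraph V E) [Fintype E] :
    Multigraph (V ⊕ ((Σ v : V, Fin (G.mdeg v)) × Bool))
      (E ⊕ (((Σ v : V, Fin (G.mdeg v)) × Fin 2) ⊕ ((Σ v : V, Fin (G.mdeg v)) × Bool))) where
  ends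
    | .inl e => (G.ends e).map .inl
    | .inr (.inl (p, _)) => s(.inr (p, false), .inr (p, true))
    | .inr (.inr (p, b)) => s(.inl p.1, .inr (p, b))
  loopless := by
    rintro (e | ⟨p, i⟩ | ⟨p, b⟩) h
    · exact G.loopless e ((isDiag_map_inl _).1 h)
    · simp at h
    · simp at h

/-- The subdivision of `G` in which the edge `e` (oriented from `src e` to `tgt e`)
is subdivided `n e` times, i.e. replaced by a path with `n e` internal vertices. -/
def subdivide (G : Multigraph V E) (src tgt : E → V)
    (hst : ∀ e, G.ends e = s(src e, tgt e)) (n : E → ℕ) :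
    Multigraph (V ⊕ (Σ e : E, Fin (n e))) (Σ e : E, Fin (n e + 1)) where
  ends := fun q =>
    s(if _ : q.2.val = 0 then Sum.inl (src q.1)
        else Sum.inr ⟨q.1, ⟨q.2.val - 1, by have := q.2.isLt; omega⟩⟩,
      if _ : q.2.val = n q.1 then Sum.inl (tgt q.1)
        else Sum.inr ⟨q.1, ⟨q.2.val, by have := q.2.isLt; omega⟩⟩)
  loopless := by
    rintro ⟨e, i⟩ h
    rw [Sym2.mk_isDiag_iff] at h
    split_ifs at h with h1 h2 h2 <;>
      first
        | exact Sum.noConfusion h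
        | (have hl := G.loopless e
           rw [hst e, Sym2.mk_isDiag_iff] at hl
           exact hl (Sum.inl.inj h))
        | (have h3 := Sum.inr.inj h
           have h4 := congrArg (fun x : (Σ e : E, Fin (n e)) => x.2.val) h3
           dsimp only at h1 h4
           omega)

end Multigraph

namespace Multigraph

/-- The multigraph underlying a simple graph. -/
def ofSimple {α : Type} (S : SimpleGraph α) : Multigraph α S.edgeSet where
  ends e := e.1
  loopless e := S.not_isDiag_of_mem_edgeSet e.2

/-- A strong immersion model: additionally, no branch vertex is an internal
vertex of a certifying path. -/
structure StrongImmersionModel {V1 E1 V E : Type} (H : Multigraph V1 E1) (G : Multigraph V E)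
    extends ImmersionModel H G where
  not_internal : ∀ (e : E1) (x : V1), vmap x ∉ (path e).interior

/-- An `H`-topological-minor model in `G`: certifying paths are internally
vertex-disjoint and their internal vertices avoid the branch vertices. -/
structure TopMinorModel {V1 E1 V E : Type} (H : Multigraph V1 E1) (G : Multigraph V E) where
  vmap : V1 → V
  vmap_inj : Function.Injective vmap
  src : E1 → V1
  tgt : E1 → V1
  ends_eq : ∀ e, H.ends e = s(src e, tgt e)
  path : ∀ e, G.Walk (vmap (src e)) (vmap (tgt e))
  path_isPath : ∀ e, (path e).IsPath
  internal_disjoint : ∀ e₁ e₂, e₁ ≠ e₂ → ∀ x, x ∈ (path e₁).interior → x ∉ (path e₂).support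
  internal_avoid : ∀ (e : E1) (x : V1), vmap x ∉ (path e).interior

end Multigraph

section Walls

/-- The `m × n` grid graph. -/
def gridGraph (m n : ℕ) : SimpleGraph (Fin m × Fin n) where
  Adj p q := (p.1 = q.1 ∧ (p.2.val + 1 = q.2.val ∨ q.2.val + 1 = p.2.val)) ∨
             (p.2 = q.2 ∧ (p.1.val + 1 = q.1.val ∨ q.1.val + 1 = p.1.val))
  symm := ⟨by rintro p q (⟨h, h'⟩ | ⟨h, h'⟩) <;> [left; right] <;> exact ⟨h.symm, h'.symm⟩⟩
  loopless := ⟨by rintro p (⟨-, h | h⟩ | ⟨-, h | h⟩) <;> omega⟩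

/-- The `k×k` grid `Γ_k` as a multigraph. -/
def Gamma (k : ℕ) : Multigraph (Fin k × Fin k) (gridGraph k k).edgeSet :=
  Multigraph.ofSimple (gridGraph k k)

/-- The `(k+1) × (2k+2)` grid with the vertical edges `{(x,y),(x+1,y)}` with `x+y` odd
(in 1-indexed coordinates) removed. -/
def wallPre (k : ℕ) : SimpleGraph (Fin (k + 1) × Fin (2 * k + 2)) where
  Adj p q := (gridGraph (k + 1) (2 * k + 2)).Adj p q ∧
    ¬ (p.2 = q.2 ∧ (min p.1.val q.1.val + p.2.val) % 2 = 1)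
  symm := ⟨by
    rintro p q ⟨h, h'⟩
    refine ⟨(gridGraph _ _).symm.symm _ _ h, fun ⟨hc, hp⟩ => h' ⟨hc.symm, ?_⟩⟩
    rw [Nat.min_comm] at hp
    rw [← hc]
    exact hp⟩
  loopless := ⟨fun p h => (gridGraph _ _).loopless.irrefl p h.1⟩

/-- Degree of a vertex in `wallPre k`. -/
noncomputable def wallPreDeg (k : ℕ) (v : Fin (k + 1) × Fin (2 * k + 2)) : ℕ :=
  (Finset.univ.filter (fun w => (wallPre k).Adj v w)).card

/-- The vertex set of the `k`-wall: vertices of degree `≠ 1`. -/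
def wallVerts (k : ℕ) : Set (Fin (k + 1) × Fin (2 * k + 2)) :=
  {v | wallPreDeg k v ≠ 1}

/-- The `k`-wall `W_k`, as a simple graph. -/
noncomputable def wallSimple (k : ℕ) : SimpleGraph (wallVerts k) :=
  (wallPre k).induce (wallVerts k)

/-- The `k`-wall `W_k`, as a multigraph. -/
noncomputable def Wall (k : ℕ) : Multigraph (wallVerts k) (wallSimple k).edgeSet :=
  Multigraph.ofSimple (wallSimple k)

/-- The doubled edges of `W⁺_k`: the horizontal edges lying on both a vertical and a
horizontal path of the wall, i.e. those whose lower column index is odd (1-indexed). -/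
def isDoubledEdge (k : ℕ) (p : Sym2 (wallVerts k)) : Prop :=
  ∃ a b : wallVerts k, p = s(a, b) ∧ (a : Fin (k + 1) × Fin (2 * k + 2)).1 = (b : Fin (k + 1) × Fin (2 * k + 2)).1 ∧
    (b : Fin (k + 1) × Fin (2 * k + 2)).2.val = (a : Fin (k + 1) × Fin (2 * k + 2)).2.val + 1 ∧
    (a : Fin (k + 1) × Fin (2 * k + 2)).2.val % 2 = 0

/-- `W⁺_k`: the `k`-wall with a second parallel copy of every doubled edge. -/
noncomputable def WallPlus (k : ℕ) :
    Multigraph (wallVerts k)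
      ((wallSimple k).edgeSet ⊕ {p : Sym2 (wallVerts k) // p ∈ (wallSimple k).edgeSet ∧ isDoubledEdge k p}) where
  ends
    | .inl e => e.1
    | .inr e => e.1
  loopless := by
    rintro (e | e)
    · exact (wallSimple k).not_isDiag_of_mem_edgeSet e.2
    · exact (wallSimple k).not_isDiag_of_mem_edgeSet e.2.1

end Walls

namespace Multigraph

variable {V E : Type}

/-- Tree-partition width of a multigraph (bags may be empty; w.l.o.g. bags are
indexed by the vertices themselves). -/
noncomputable def tpw (G : Multigraph V E) [Fintype V] [Fintype E] : ℕ :=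
  sInf {w | ∃ T : SimpleGraph V, T.IsTree ∧ ∃ bag : V → V,
    (Fintype.card V = 1 ∨
      ∀ (e : E) (a b : V), G.ends e = s(a, b) → bag a = bag b ∨ T.Adj (bag a) (bag b)) ∧
    (∀ t : V, (Finset.univ.filter (fun v => bag v = t)).card ≤ w) ∧
    (∀ t t' : V, T.Adj t t' →
      (Finset.univ.filter (fun e : E =>
        ∃ a b, G.ends e = s(a, b) ∧ bag a = t ∧ bag b = t')).card ≤ w)}

section ThreeCenter

variable {W : Type} [Fintype W]

/-- Degree of `v` in the state `(A, m)`: `A` is the set of remaining vertices and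
`m` gives edge multiplicities. -/
noncomputable def stDeg (A : Finset W) (m : Sym2 W → ℕ) (v : W) : ℕ :=
  ∑ w ∈ A.erase v, m s(v, w)

/-- One reduction step of the 3-center construction relative to the marked set `X`:
delete a vertex of degree one, or suppress (dissolve) a vertex of degree two not in `X`. -/
inductive CStep (X : Set W) :
    Finset W × (Sym2 W → ℕ) → Finset W × (Sym2 W → ℕ) → Prop
  | delete (A : Finset W) (m : Sym2 W → ℕ) (v : W) (hv : v ∈ A) (hd : stDeg A m v = 1) :
      CStep X (A, m) (A.erase v, fun p => if v ∈ p then 0 else m p)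
  | suppress (A : Finset W) (m : Sym2 W → ℕ) (v a b : W) (hv : v ∈ A) (hx : v ∉ X)
      (ha : a ∈ A) (hb : b ∈ A) (hav : a ≠ v) (hbv : b ≠ v) (hd : stDeg A m v = 2)
      (h1 : 1 ≤ m s(v, a)) (h2 : a = b → m s(v, a) = 2) (h3 : a ≠ b → 1 ≤ m s(v, b)) :
      CStep X (A, m) (A.erase v,
        fun p => if v ∈ p then 0 else if a ≠ b ∧ p = s(a, b) then m p + 1 else m p)

/-- The number of vertices of the 3-center of the marked multigraph given by the
state `(A, m)` with marked set `X`: the size of a reduct on which no step applies. -/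
noncomputable def centerSize (X : Set W) (A : Finset W) (m : Sym2 W → ℕ) : ℕ :=
  sInf {c | ∃ s : Finset W × (Sym2 W → ℕ),
    Relation.ReflTransGen (CStep X) (A, m) s ∧ (∀ s', ¬ CStep X s s') ∧ s.1.card = c}

end ThreeCenter

section TCW

variable {n : ℕ}

/-- The consolidation map for the torso at node `t` of a tree-cut decomposition:
a vertex whose bag is `t` is kept, and any other vertex is sent to the peripheral
vertex indexed by the neighbour `u` of `t` whose branch contains its bag. -/
noncomputable def consMap (T : SimpleGraph (Fin n)) (bag : V → Fin n) (t : Fin n) (a : V) :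
    V ⊕ Fin n :=
  if bag a = t then Sum.inl a
  else if h : ∃ u, T.Adj t u ∧ (T.deleteEdges {s(t, u)}).Reachable (bag a) u
    then Sum.inr h.choose else Sum.inl a

/-- The vertex set of the torso at `t`: the bag of `t` together with one peripheral
vertex for each neighbour of `t` in the decomposition tree. -/
noncomputable def torsoA [Fintype V] (T : SimpleGraph (Fin n)) (bag : V → Fin n) (t : Fin n) :
    Finset (V ⊕ Fin n) :=
  (Finset.univ.filter (fun a : V => bag a = t)).image Sum.inl ∪
    (Finset.univ.filter (fun u : Fin n => T.Adj t u)).image Sum.inr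

/-- The edge multiplicities of the torso at `t`. -/
noncomputable def torsoM (G : Multigraph V E) [Fintype E] (T : SimpleGraph (Fin n))
    (bag : V → Fin n) (t : Fin n) : Sym2 (V ⊕ Fin n) → ℕ :=
  fun p => if p.IsDiag then 0
    else (Finset.univ.filter (fun e : E => (G.ends e).map (consMap T bag t) = p)).card

/-- The adhesion of the tree edge `{t, t'}`: the number of edges of `G` whose endpoints
lie in bags on different sides of the edge. -/
noncomputable def adhE (G : Multigraph V E) [Fintype E] (T : SimpleGraph (Fin n))
    (bag : V → Fin n) (t t' : Fin n) : ℕ :=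
  (Finset.univ.filter (fun e : E => ∃ a b, G.ends e = s(a, b) ∧
    (T.deleteEdges {s(t, t')}).Reachable (bag a) t ∧
    (T.deleteEdges {s(t, t')}).Reachable (bag b) t')).card

/-- Tree-cut width of a multigraph: the minimum, over tree-cut decompositions, of
the maximum of all adhesions and of the numbers of vertices of the 3-centers
of the torsos. -/
noncomputable def tcw (G : Multigraph V E) [Fintype V] [Fintype E] : ℕ :=
  sInf {w | ∃ (n : ℕ) (T : SimpleGraph (Fin n)), T.IsTree ∧ ∃ bag : V → Fin n,
    (∀ t t', T.Adj t t' → adhE G T bag t t' ≤ w) ∧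
    (∀ t, centerSize (Sum.inl '' {a | bag a = t}) (torsoA T bag t) (torsoM G T bag t) ≤ w)}

end TCW

end Multigraph


section GWAux

open Multigraph

variable {k : ℕ}

/-- Wall grid vertex constructor. -/
def gvtx (x y : ℕ) (hx : x < k + 1) (hy : y < 2 * k + 2) : Fin (k + 1) × Fin (2 * k + 2) :=
  (⟨x, hx⟩, ⟨y, hy⟩)

lemma adjHor {x y : ℕ} (hx : x < k + 1) (hy : y < 2 * k + 2) (hy' : y + 1 < 2 * k + 2) :
    (wallPre k).Adj (gvtx x y hx hy) (gvtx x (y + 1) hx hy') := by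
  show (_ ∨ _) ∧ ¬ _
  refine ⟨Or.inl ⟨rfl, Or.inl rfl⟩, ?_⟩
  rintro ⟨h, -⟩
  simp [gvtx, Fin.ext_iff] at h

lemma adjVer {x y : ℕ} (hx : x < k + 1) (hx' : x + 1 < k + 1) (hy : y < 2 * k + 2)
    (hp : (x + y) % 2 = 0) :
    (wallPre k).Adj (gvtx x y hx hy) (gvtx (x + 1) y hx' hy) := by
  show (_ ∨ _) ∧ ¬ _
  refine ⟨Or.inr ⟨rfl, Or.inl rfl⟩, ?_⟩
  rintro ⟨-, h⟩
  simp [gvtx] at h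
  omega

lemma mem_wallVerts' {x y : ℕ} (hx : x < k) (hy : y < 2 * k) (hx' : x < k + 1)
    (hy' : y < 2 * k + 2) : gvtx x y hx' hy' ∈ wallVerts k := by
  have h2 : 1 < wallPreDeg k (gvtx x y hx' hy') := by
    rw [wallPreDeg, Finset.one_lt_card]
    rcases Nat.eq_zero_or_pos y with rfl | hy0
    · rcases Nat.mod_two_eq_zero_or_one x with he | ho
      · refine ⟨gvtx x 1 hx' (by omega), ?_, gvtx (x+1) 0 (by omega) hy', ?_, ?_⟩
        · exact Finset.mem_filter.2 ⟨Finset.mem_univ _, adjHor hx' hy' (by omega)⟩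
        · exact Finset.mem_filter.2 ⟨Finset.mem_univ _, adjVer hx' (by omega) hy' (by omega)⟩
        · simp [gvtx, Prod.ext_iff, Fin.ext_iff]
      · obtain ⟨z, rfl⟩ : ∃ z, x = z + 1 := ⟨x - 1, by omega⟩
        refine ⟨gvtx (z+1) 1 hx' (by omega), ?_, gvtx z 0 (by omega) hy', ?_, ?_⟩
        · exact Finset.mem_filter.2 ⟨Finset.mem_univ _, adjHor hx' hy' (by omega)⟩
        · exact Finset.mem_filter.2 ⟨Finset.mem_univ _,
            (wallPre k).symm.symm _ _ (adjVer (by omega) hx' hy' (by omega))⟩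
        · simp [gvtx, Prod.ext_iff, Fin.ext_iff]
    · obtain ⟨w, rfl⟩ : ∃ w, y = w + 1 := ⟨y - 1, by omega⟩
      refine ⟨gvtx x (w+2) hx' (by omega), ?_, gvtx x w hx' (by omega), ?_, ?_⟩
      · exact Finset.mem_filter.2 ⟨Finset.mem_univ _, adjHor hx' hy' (by omega)⟩
      · exact Finset.mem_filter.2 ⟨Finset.mem_univ _,
          (wallPre k).symm.symm _ _ (adjHor hx' (by omega) hy')⟩
      · simp [gvtx, Prod.ext_iff, Fin.ext_iff]
  simp only [wallVerts, Set.mem_setOf_eq]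
  omega

/-- Wall vertex as element of `wallVerts k`. -/
def wvtx (x y : ℕ) (hx : x < k) (hy : y < 2 * k) : ↥(wallVerts k) :=
  ⟨gvtx x y (by omega) (by omega), mem_wallVerts' hx hy _ _⟩

lemma adjWS {x y x' y' : ℕ} {hx : x < k} {hy : y < 2 * k} {hx' : x' < k} {hy' : y' < 2 * k}
    (h : (x' = x ∧ y' = y + 1) ∨ (y' = y ∧ x' = x + 1 ∧ (x + y) % 2 = 0)) :
    (wallSimple k).Adj (wvtx x y hx hy) (wvtx x' y' hx' hy') := by
  rcases h with ⟨rfl, rfl⟩ | ⟨rfl, rfl, hp⟩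
  · exact adjHor _ _ _
  · exact adjVer _ _ _ hp

def eSgl (a b : ↥(wallVerts k)) (h : (wallSimple k).Adj a b) :
    (wallSimple k).edgeSet ⊕
      {p : Sym2 ↥(wallVerts k) // p ∈ (wallSimple k).edgeSet ∧ isDoubledEdge k p} :=
  Sum.inl ⟨s(a, b), (wallSimple k).mem_edgeSet.2 h⟩

def eDbl (a b : ↥(wallVerts k)) (h : (wallSimple k).Adj a b) (hd : isDoubledEdge k s(a, b)) :
    (wallSimple k).edgeSet ⊕
      {p : Sym2 ↥(wallVerts k) // p ∈ (wallSimple k).edgeSet ∧ isDoubledEdge k p} :=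
  Sum.inr ⟨s(a, b), (wallSimple k).mem_edgeSet.2 h, hd⟩

lemma mkDoubled {x y : ℕ} {hx : x < k} {hy : y < 2 * k} {hy' : y + 1 < 2 * k}
    (hp : y % 2 = 0) : isDoubledEdge k s(wvtx x y hx hy, wvtx x (y+1) hx hy') :=
  ⟨_, _, rfl, rfl, rfl, hp⟩

/-- Branch vertex of grid vertex `(i,j)` : wall vertex `(i, 2j)`. -/
def vmapF (p : Fin k × Fin k) : ↥(wallVerts k) :=
  wvtx p.1.val (2 * p.2.val) p.1.isLt (by have := p.2.isLt; omega)

@[simp] lemma support_nil' {V E : Type} {G : Multigraph V E} (v : V) :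
    (Walk.nil (G := G) v).support = [v] := rfl

@[simp] lemma support_cons' {V E : Type} {G : Multigraph V E} {u v w : V} (e : E)
    (he : G.ends e = s(u, v)) (p : G.Walk v w) :
    (Walk.cons e he p).support = u :: p.support := rfl

@[simp] lemma edges_nil' {V E : Type} {G : Multigraph V E} (v : V) :
    (Walk.nil (G := G) v).edges = [] := rfl

@[simp] lemma edges_cons' {V E : Type} {G : Multigraph V E} {u v w : V} (e : E)
    (he : G.ends e = s(u, v)) (p : G.Walk v w) :
    (Walk.cons e he p).edges = e :: p.edges := rfl

def horizO (a b : Fin k × Fin k) : Prop := a.1 = b.1 ∧ a.2.val + 1 = b.2.val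
def vertO (a b : Fin k × Fin k) : Prop := a.2 = b.2 ∧ a.1.val + 1 = b.1.val

def hPath (a b : Fin k × Fin k) (hh : horizO a b) :
    (WallPlus k).Walk (vmapF a) (vmapF b) :=
  Walk.cons
    (eSgl (vmapF a)
      (wvtx a.1.val (2 * a.2.val + 1) a.1.isLt (by have := b.2.isLt; have := hh.2; omega))
      (adjWS (Or.inl ⟨rfl, rfl⟩))) rfl
    (Walk.cons
      (eSgl (wvtx a.1.val (2 * a.2.val + 1) a.1.isLt
          (by have := b.2.isLt; have := hh.2; omega)) (vmapF b)
        (adjWS (Or.inl ⟨by rw [hh.1], by have := hh.2; omega⟩))) rfl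
      (Walk.nil _))

def vPathE (a b : Fin k × Fin k) (hv : vertO a b) (hp : a.1.val % 2 = 0) :
    (WallPlus k).Walk (vmapF a) (vmapF b) :=
  Walk.cons (eSgl (vmapF a) (vmapF b)
      (adjWS (Or.inr ⟨by rw [hv.1], hv.2.symm, by omega⟩))) rfl (Walk.nil _)

def vPathO (a b : Fin k × Fin k) (hv : vertO a b) (hp : a.1.val % 2 = 1) :
    (WallPlus k).Walk (vmapF a) (vmapF b) :=
  Walk.cons (eDbl (vmapF a)
      (wvtx a.1.val (2 * a.2.val + 1) a.1.isLt (by have := a.2.isLt; omega))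
      (adjWS (Or.inl ⟨rfl, rfl⟩)) (mkDoubled (by omega))) rfl
  (Walk.cons (eSgl (wvtx a.1.val (2 * a.2.val + 1) a.1.isLt (by have := a.2.isLt; omega))
      (wvtx b.1.val (2 * b.2.val + 1) b.1.isLt (by have := b.2.isLt; omega))
      (adjWS (Or.inr ⟨by rw [hv.1], hv.2.symm, by omega⟩))) rfl
  (Walk.cons (eDbl (vmapF b)
      (wvtx b.1.val (2 * b.2.val + 1) b.1.isLt (by have := b.2.isLt; omega))
      (adjWS (Or.inl ⟨rfl, rfl⟩)) (mkDoubled (by omega))) Sym2.eq_swap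
  (Walk.nil _)))

lemma exists_oriented (e : (gridGraph k k).edgeSet) :
    ∃ p : (Fin k × Fin k) × (Fin k × Fin k),
      e.1 = s(p.1, p.2) ∧ (horizO p.1 p.2 ∨ vertO p.1 p.2) := by
  obtain ⟨q, hq⟩ := e
  induction q using Sym2.ind with
  | _ a b =>
    rw [SimpleGraph.mem_edgeSet] at hq
    rcases hq with ⟨h1, h2 | h2⟩ | ⟨h1, h2 | h2⟩
    · exact ⟨(a, b), rfl, Or.inl ⟨h1, h2⟩⟩
    · exact ⟨(b, a), Sym2.eq_swap, Or.inl ⟨h1.symm, h2⟩⟩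
    · exact ⟨(a, b), rfl, Or.inr ⟨h1, h2⟩⟩
    · exact ⟨(b, a), Sym2.eq_swap, Or.inr ⟨h1.symm, h2⟩⟩

noncomputable def srcF (e : (gridGraph k k).edgeSet) : Fin k × Fin k :=
  (exists_oriented e).choose.1

noncomputable def tgtF (e : (gridGraph k k).edgeSet) : Fin k × Fin k :=
  (exists_oriented e).choose.2

lemma specF1 (e : (gridGraph k k).edgeSet) : e.1 = s(srcF e, tgtF e) :=
  (exists_oriented e).choose_spec.1

lemma specF2 (e : (gridGraph k k).edgeSet) :
    horizO (srcF e) (tgtF e) ∨ vertO (srcF e) (tgtF e) :=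
  (exists_oriented e).choose_spec.2

lemma vert_of (e : (gridGraph k k).edgeSet) (h : ¬ horizO (srcF e) (tgtF e)) :
    vertO (srcF e) (tgtF e) := (specF2 e).resolve_left h

noncomputable def pathF (e : (gridGraph k k).edgeSet) :
    (WallPlus k).Walk (vmapF (srcF e)) (vmapF (tgtF e)) :=
  if hh : horizO (srcF e) (tgtF e) then hPath _ _ hh
  else if hp : (srcF e).1.val % 2 = 0 then vPathE _ _ (vert_of e hh) hp
  else vPathO _ _ (vert_of e hh) (by omega)

lemma pathF_eq_h (e : (gridGraph k k).edgeSet) (hh : horizO (srcF e) (tgtF e)) :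
    pathF e = hPath _ _ hh := by
  unfold pathF; rw [dif_pos hh]

lemma pathF_eq_ve (e : (gridGraph k k).edgeSet) (hh : ¬ horizO (srcF e) (tgtF e))
    (hp : (srcF e).1.val % 2 = 0) : pathF e = vPathE _ _ (vert_of e hh) hp := by
  unfold pathF; rw [dif_neg hh, dif_pos hp]

lemma pathF_eq_vo (e : (gridGraph k k).edgeSet) (hh : ¬ horizO (srcF e) (tgtF e))
    (hp : ¬ (srcF e).1.val % 2 = 0) : pathF e = vPathO _ _ (vert_of e hh) (by omega) := by
  unfold pathF; rw [dif_neg hh, dif_neg hp]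

end GWAux


section GWAux2

open Multigraph

variable {k : ℕ}

lemma vmapF_inj : Function.Injective (vmapF (k := k)) := by
  intro p q h
  simp only [vmapF, wvtx, gvtx, Subtype.mk.injEq, Prod.mk.injEq, Fin.mk.injEq] at h
  exact Prod.ext_iff.2 ⟨Fin.ext h.1, Fin.ext (by omega)⟩

lemma isPath_pathF (e : (gridGraph k k).edgeSet) : (pathF (k := k) e).IsPath := by
  rcases Classical.em (horizO (srcF e) (tgtF e)) with hh | hh
  · rw [pathF_eq_h e hh]
    have h2 := hh.2
    simp only [Walk.IsPath, hPath, support_cons', support_nil', Walk.support, List.nodup_cons, List.mem_cons,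
      List.mem_singleton, List.not_mem_nil, List.nodup_nil, eSgl, vmapF, wvtx, gvtx,
      Subtype.mk.injEq, Prod.mk.injEq, Fin.mk.injEq, and_true, not_or]
    (repeat' apply And.intro) <;> (first | trivial | omega | (intro h; have h' := congrArg (fun v : ↥(wallVerts k) => ((v.1.1.val, v.1.2.val) : ℕ × ℕ)) h; simp only [Prod.mk.injEq] at h'; omega))
  · have hv := vert_of e hh
    have h2 := hv.2
    have hc := congrArg Fin.val hv.1
    rcases Classical.em ((srcF e).1.val % 2 = 0) with hp | hp
    · rw [pathF_eq_ve e hh hp]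
      simp only [Walk.IsPath, vPathE, support_cons', support_nil', Walk.support, List.nodup_cons,
        List.mem_singleton, List.not_mem_nil, List.nodup_nil, eSgl, vmapF, wvtx, gvtx,
        Subtype.mk.injEq, Prod.mk.injEq, Fin.mk.injEq, and_true, not_false_eq_true, not_or]
      (repeat' apply And.intro) <;> (first | trivial | omega | (intro h; have h' := congrArg (fun v : ↥(wallVerts k) => ((v.1.1.val, v.1.2.val) : ℕ × ℕ)) h; simp only [Prod.mk.injEq] at h'; omega))
    · rw [pathF_eq_vo e hh hp]
      simp only [Walk.IsPath, vPathO, support_cons', support_nil', Walk.support, List.nodup_cons, List.mem_cons,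
        List.mem_singleton, List.not_mem_nil, List.nodup_nil, eSgl, eDbl, vmapF, wvtx, gvtx,
        Subtype.mk.injEq, Prod.mk.injEq, Fin.mk.injEq, and_true, not_or]
      (repeat' apply And.intro) <;> (first | trivial | omega | (intro h; have h' := congrArg (fun v : ↥(wallVerts k) => ((v.1.1.val, v.1.2.val) : ℕ × ℕ)) h; simp only [Prod.mk.injEq] at h'; omega))

lemma not_internal_pathF (e : (gridGraph k k).edgeSet) (x : Fin k × Fin k) :
    vmapF x ∉ (pathF (k := k) e).interior := by
  rcases Classical.em (horizO (srcF e) (tgtF e)) with hh | hh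
  · rw [pathF_eq_h e hh]
    simp only [Walk.interior, hPath, support_cons', support_nil', Walk.support, List.tail_cons,
      List.dropLast, List.mem_cons, List.not_mem_nil, or_false, vmapF, wvtx, gvtx,
      Subtype.mk.injEq, Prod.mk.injEq, Fin.mk.injEq, List.mem_singleton, not_or]
    (repeat' apply And.intro) <;> (first | trivial | omega | (intro h; have h' := congrArg (fun v : ↥(wallVerts k) => ((v.1.1.val, v.1.2.val) : ℕ × ℕ)) h; simp only [Prod.mk.injEq] at h'; omega))
  · rcases Classical.em ((srcF e).1.val % 2 = 0) with hp | hp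
    · rw [pathF_eq_ve e hh hp]
      simp [Walk.interior, vPathE, List.dropLast, Walk.support]
    · rw [pathF_eq_vo e hh hp]
      simp only [Walk.interior, vPathO, support_cons', support_nil', Walk.support, List.tail_cons,
        List.dropLast, List.mem_cons, List.not_mem_nil, or_false, vmapF, wvtx, gvtx,
        Subtype.mk.injEq, Prod.mk.injEq, Fin.mk.injEq, List.mem_singleton, not_or]
      (repeat' apply And.intro) <;> (first | trivial | omega | (intro h; have h' := congrArg (fun v : ↥(wallVerts k) => ((v.1.1.val, v.1.2.val) : ℕ × ℕ)) h; simp only [Prod.mk.injEq] at h'; omega))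

set_option maxHeartbeats 2000000 in
lemma edge_disjoint_pathF (e1 e2 : (gridGraph k k).edgeSet) (hne : e1 ≠ e2)
    (x : (wallSimple k).edgeSet ⊕
      {p : Sym2 ↥(wallVerts k) // p ∈ (wallSimple k).edgeSet ∧ isDoubledEdge k p})
    (hx1 : x ∈ (pathF (k := k) e1).edges) (hx2 : x ∈ (pathF e2).edges) : False := by
  have hne' : ¬((srcF e1).1.val = (srcF e2).1.val ∧ (srcF e1).2.val = (srcF e2).2.val ∧
      (tgtF e1).1.val = (tgtF e2).1.val ∧ (tgtF e1).2.val = (tgtF e2).2.val) := by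
    rintro ⟨a1, a2, a3, a4⟩
    refine hne (Subtype.ext ?_)
    rw [specF1 e1, specF1 e2,
      show srcF e1 = srcF e2 from Prod.ext_iff.2 ⟨Fin.ext a1, Fin.ext a2⟩,
      show tgtF e1 = tgtF e2 from Prod.ext_iff.2 ⟨Fin.ext a3, Fin.ext a4⟩]
  rcases Classical.em (horizO (srcF e1) (tgtF e1)) with h1 | h1
  · rw [pathF_eq_h e1 h1] at hx1
    obtain ⟨h1a, h1b⟩ := h1
    have h1a' := congrArg Fin.val h1a
    simp only [hPath, vPathE, vPathO, edges_cons', edges_nil', Walk.edges, List.mem_cons, List.not_mem_nil, or_false] at hx1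
    rcases Classical.em (horizO (srcF e2) (tgtF e2)) with h3 | h3
    · rw [pathF_eq_h e2 h3] at hx2
      obtain ⟨h3a, h3b⟩ := h3
      have h3a' := congrArg Fin.val h3a
      simp only [hPath, vPathE, vPathO, edges_cons', edges_nil', Walk.edges, List.mem_cons, List.not_mem_nil, or_false] at hx2
      (rcases hx1 with rfl | rfl) <;> (simp only [eSgl, eDbl, vmapF, wvtx, gvtx, Sum.inl.injEq, Sum.inr.injEq, Subtype.mk.injEq, Sym2.eq_iff, Prod.mk.injEq, Fin.mk.injEq, reduceCtorEq, false_or, or_false, false_and, and_false, and_true, true_and, not_false_eq_true] at hx2) <;> all_goals omega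
    · have hv3 := vert_of e2 h3
      obtain ⟨h3a, h3b⟩ := hv3
      have h3a' := congrArg Fin.val h3a
      rcases Classical.em ((srcF e2).1.val % 2 = 0) with hp3 | hp3
      · rw [pathF_eq_ve e2 h3 hp3] at hx2
        simp only [hPath, vPathE, vPathO, edges_cons', edges_nil', Walk.edges, List.mem_cons, List.not_mem_nil, or_false] at hx2
        (rcases hx1 with rfl | rfl) <;> (simp only [eSgl, eDbl, vmapF, wvtx, gvtx, Sum.inl.injEq, Sum.inr.injEq, Subtype.mk.injEq, Sym2.eq_iff, Prod.mk.injEq, Fin.mk.injEq, reduceCtorEq, false_or, or_false, false_and, and_false, and_true, true_and, not_false_eq_true] at hx2) <;> all_goals omega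
      · rw [pathF_eq_vo e2 h3 hp3] at hx2
        simp only [hPath, vPathE, vPathO, edges_cons', edges_nil', Walk.edges, List.mem_cons, List.not_mem_nil, or_false] at hx2
        (rcases hx1 with rfl | rfl) <;> (simp only [eSgl, eDbl, vmapF, wvtx, gvtx, Sum.inl.injEq, Sum.inr.injEq, Subtype.mk.injEq, Sym2.eq_iff, Prod.mk.injEq, Fin.mk.injEq, reduceCtorEq, false_or, or_false, false_and, and_false, and_true, true_and, not_false_eq_true] at hx2) <;> all_goals omega
  · have hv1 := vert_of e1 h1
    obtain ⟨h1a, h1b⟩ := hv1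
    have h1a' := congrArg Fin.val h1a
    rcases Classical.em ((srcF e1).1.val % 2 = 0) with hp1 | hp1
    · rw [pathF_eq_ve e1 h1 hp1] at hx1
      simp only [hPath, vPathE, vPathO, edges_cons', edges_nil', Walk.edges, List.mem_cons, List.not_mem_nil, or_false] at hx1
      rcases Classical.em (horizO (srcF e2) (tgtF e2)) with h3 | h3
      · rw [pathF_eq_h e2 h3] at hx2
        obtain ⟨h3a, h3b⟩ := h3
        have h3a' := congrArg Fin.val h3a
        simp only [hPath, vPathE, vPathO, edges_cons', edges_nil', Walk.edges, List.mem_cons, List.not_mem_nil, or_false] at hx2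
        (subst hx1) <;> (simp only [eSgl, eDbl, vmapF, wvtx, gvtx, Sum.inl.injEq, Sum.inr.injEq, Subtype.mk.injEq, Sym2.eq_iff, Prod.mk.injEq, Fin.mk.injEq, reduceCtorEq, false_or, or_false, false_and, and_false, and_true, true_and, not_false_eq_true] at hx2) <;> all_goals omega
      · have hv3 := vert_of e2 h3
        obtain ⟨h3a, h3b⟩ := hv3
        have h3a' := congrArg Fin.val h3a
        rcases Classical.em ((srcF e2).1.val % 2 = 0) with hp3 | hp3
        · rw [pathF_eq_ve e2 h3 hp3] at hx2
          simp only [hPath, vPathE, vPathO, edges_cons', edges_nil', Walk.edges, List.mem_cons, List.not_mem_nil, or_false] at hx2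
          (subst hx1) <;> (simp only [eSgl, eDbl, vmapF, wvtx, gvtx, Sum.inl.injEq, Sum.inr.injEq, Subtype.mk.injEq, Sym2.eq_iff, Prod.mk.injEq, Fin.mk.injEq, reduceCtorEq, false_or, or_false, false_and, and_false, and_true, true_and, not_false_eq_true] at hx2) <;> all_goals omega
        · rw [pathF_eq_vo e2 h3 hp3] at hx2
          simp only [hPath, vPathE, vPathO, edges_cons', edges_nil', Walk.edges, List.mem_cons, List.not_mem_nil, or_false] at hx2
          (subst hx1) <;> (simp only [eSgl, eDbl, vmapF, wvtx, gvtx, Sum.inl.injEq, Sum.inr.injEq, Subtype.mk.injEq, Sym2.eq_iff, Prod.mk.injEq, Fin.mk.injEq, reduceCtorEq, false_or, or_false, false_and, and_false, and_true, true_and, not_false_eq_true] at hx2) <;> all_goals omega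
    · rw [pathF_eq_vo e1 h1 hp1] at hx1
      simp only [hPath, vPathE, vPathO, edges_cons', edges_nil', Walk.edges, List.mem_cons, List.not_mem_nil, or_false] at hx1
      rcases Classical.em (horizO (srcF e2) (tgtF e2)) with h3 | h3
      · rw [pathF_eq_h e2 h3] at hx2
        obtain ⟨h3a, h3b⟩ := h3
        have h3a' := congrArg Fin.val h3a
        simp only [hPath, vPathE, vPathO, edges_cons', edges_nil', Walk.edges, List.mem_cons, List.not_mem_nil, or_false] at hx2
        (rcases hx1 with rfl | rfl | rfl) <;> (simp only [eSgl, eDbl, vmapF, wvtx, gvtx, Sum.inl.injEq, Sum.inr.injEq, Subtype.mk.injEq, Sym2.eq_iff, Prod.mk.injEq, Fin.mk.injEq, reduceCtorEq, false_or, or_false, false_and, and_false, and_true, true_and, not_false_eq_true] at hx2) <;> all_goals omega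
      · have hv3 := vert_of e2 h3
        obtain ⟨h3a, h3b⟩ := hv3
        have h3a' := congrArg Fin.val h3a
        rcases Classical.em ((srcF e2).1.val % 2 = 0) with hp3 | hp3
        · rw [pathF_eq_ve e2 h3 hp3] at hx2
          simp only [hPath, vPathE, vPathO, edges_cons', edges_nil', Walk.edges, List.mem_cons, List.not_mem_nil, or_false] at hx2
          (rcases hx1 with rfl | rfl | rfl) <;> (simp only [eSgl, eDbl, vmapF, wvtx, gvtx, Sum.inl.injEq, Sum.inr.injEq, Subtype.mk.injEq, Sym2.eq_iff, Prod.mk.injEq, Fin.mk.injEq, reduceCtorEq, false_or, or_false, false_and, and_false, and_true, true_and, not_false_eq_true] at hx2) <;> all_goals omega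
        · rw [pathF_eq_vo e2 h3 hp3] at hx2
          simp only [hPath, vPathE, vPathO, edges_cons', edges_nil', Walk.edges, List.mem_cons, List.not_mem_nil, or_false] at hx2
          (rcases hx1 with rfl | rfl | rfl) <;> (simp only [eSgl, eDbl, vmapF, wvtx, gvtx, Sum.inl.injEq, Sum.inr.injEq, Subtype.mk.injEq, Sym2.eq_iff, Prod.mk.injEq, Fin.mk.injEq, reduceCtorEq, false_or, or_false, false_and, and_false, and_true, true_and, not_false_eq_true] at hx2) <;> all_goals omega

end GWAux2

/-- For `k ≥ 2`, the grid `Γ_k` is a strong immersion of `W⁺_k`, with a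
model whose branch vertices all lie in `{(i, 2j+1) : 1 ≤ i ≤ k+1, 0 ≤ j ≤ k}`
(in 0-indexed coordinates: their column index is even). -/
theorem gamma_strong_immersion_wallPlus (k : ℕ) (hk : 2 ≤ k) :
    ∃ m : Multigraph.StrongImmersionModel (Gamma k) (WallPlus k),
      ∀ x : Fin k × Fin k,
        (((m.vmap x : Fin (k + 1) × Fin (2 * k + 2))).2 : ℕ) % 2 = 0 := by
  refine ⟨⟨⟨vmapF, vmapF_inj, srcF, tgtF, specF1, pathF, isPath_pathF,
    fun e1 e2 h x hx1 hx2 => (edge_disjoint_pathF e1 e2 h x hx1 hx2).elim⟩,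
    fun e x => not_internal_pathF e x⟩, ?_⟩
  intro x
  simp [vmapF, wvtx, gvtx]
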